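/- The conditional average treatment effect is identified by the difference of the outcome regressions: Q¹(X) − Q⁰(X) = E[Y¹ − Y⁰ | σ(X)] P-almost surely. -/

import Mathlib

open MeasureTheory ProbabilityTheory

lemma sup_eq_generateFrom_inter' {α : Type*} (m₁ m₂ : MeasurableSpace α) :
    m₁ ⊔ m₂ = MeasurableSpace.generateFrom
      {s | ∃ t u, MeasurableSet[m₁] t ∧ MeasurableSet[m₂] u ∧ s = t ∩ u} := by
  apply le_antisymm
  · refine sup_le ?_ ?_
    · intro t ht
      exact MeasurableSpace.measurableSet_generateFrom
        ⟨t, Set.univ, ht, MeasurableSet.univ, (Set.inter_univ t).symm⟩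
    · intro u hu
      exact MeasurableSpace.measurableSet_generateFrom
        ⟨Set.univ, u, MeasurableSet.univ, hu, (Set.univ_inter u).symm⟩
  · rw [MeasurableSpace.generateFrom_le_iff]
    rintro s ⟨t, u, ht, hu, rfl⟩
    exact MeasurableSet.inter ((le_sup_left : m₁ ≤ m₁ ⊔ m₂) t ht)
      ((le_sup_right : m₂ ≤ m₁ ⊔ m₂) u hu)

lemma isPiSystem_inter' {α : Type*} (m₁ m₂ : MeasurableSpace α) :
    IsPiSystem {s | ∃ t u, MeasurableSet[m₁] t ∧ MeasurableSet[m₂] u ∧ s = t ∩ u} := by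
  rintro s ⟨t, u, ht, hu, rfl⟩ s' ⟨t', u', ht', hu', rfl⟩ -
  exact ⟨t ∩ t', u ∩ u', ht.inter ht', hu.inter hu', by ext ω; simp; tauto⟩

/-- If `A` is a `{0,1}`-valued random variable, conditionally independent of `W` given `m`,
then the conditional expectation of `A` given `m ⊔ σ(W)` coincides with the one given `m`. -/
lemma condexp_sup_of_condIndepFun {Ω β : Type*} [mΩ : MeasurableSpace Ω]
    [StandardBorelSpace Ω] [MeasurableSpace β]
    (P : Measure Ω) [IsProbabilityMeasure P]
    {m : MeasurableSpace Ω} (hm : m ≤ mΩ)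
    {W : Ω → β} (hW : Measurable[mΩ] W) {A : Ω → ℝ} (hA : Measurable[mΩ] A)
    (hA01 : ∀ ω, A ω = 0 ∨ A ω = 1)
    (hCI : CondIndepFun m hm W A P)
    {g : Ω → ℝ} (hgm : Measurable[m] g) (hgb : ∀ ω, |g ω| ≤ 1)
    (hg : g =ᵐ[P] P[A | m]) :
    g =ᵐ[P] P[A | m ⊔ MeasurableSpace.comap W inferInstance] := by
  set mW : MeasurableSpace Ω := MeasurableSpace.comap W inferInstance with hmW
  letI : MeasurableSpace Ω := mΩ
  have hm' : m ⊔ mW ≤ mΩ := sup_le hm hW.comap_le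
  have hAint : Integrable A P := by
    refine (integrable_const (1:ℝ)).mono' hA.aestronglyMeasurable (ae_of_all _ fun ω => ?_)
    rcases hA01 ω with h | h <;> simp [h]
  have hgmΩ : Measurable[mΩ] g := (hgm.mono hm le_rfl)
  have hgint : Integrable g P :=
    (integrable_const (1:ℝ)).mono' hgmΩ.aestronglyMeasurable (ae_of_all _ hgb)
  -- A is the indicator of the set a
  set a : Set Ω := A ⁻¹' {1} with ha_def
  have ha : MeasurableSet[mΩ] a := hA (measurableSet_singleton _)
  have hAind : A = a.indicator (fun _ => (1:ℝ)) := by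
    funext ω
    rcases hA01 ω with h | h
    · have : ω ∉ a := by simp [ha_def, h]
      simp [Set.indicator_of_notMem this, h]
    · have : ω ∈ a := by simp [ha_def, h]
      simp [Set.indicator_of_mem this, h]
  -- the main set-integral identity
  have main : ∀ ⦃s : Set Ω⦄, MeasurableSet[m ⊔ mW] s →
      ∫ ω in s, g ω ∂P = ∫ ω in s, A ω ∂P := by
    have h_tot : ∫ ω, g ω ∂P = ∫ ω, A ω ∂P := by
      rw [integral_congr_ae hg, integral_condExp hm]
    refine MeasurableSpace.induction_on_inter (m := m ⊔ mW)
      (C := fun s _ => ∫ ω in s, g ω ∂P = ∫ ω in s, A ω ∂P)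
      (sup_eq_generateFrom_inter' m mW) (isPiSystem_inter' m mW) ?_ ?_ ?_ ?_
    · simp
    · rintro s ⟨t, u, htm, hum, rfl⟩
      have ht : MeasurableSet[mΩ] t := hm t htm
      have hu : MeasurableSet[mΩ] u := hW.comap_le u hum
      obtain ⟨C, hC, hCu⟩ := MeasurableSpace.measurableSet_comap.mp hum
      set ind : Ω → ℝ := u.indicator (fun _ => (1:ℝ)) with hind_def
      have hindu_int : Integrable ind P := (integrable_const (1:ℝ)).indicator hu
      have hgu_int : Integrable (g * ind) P := by
        refine hindu_int.bdd_mul hgmΩ.aestronglyMeasurable (c := 1) (ae_of_all _ fun ω => ?_)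
        simpa using hgb ω
      have hL : ∫ ω in t ∩ u, g ω ∂P = ∫ ω in t, (g * P[ind | m]) ω ∂P := by
        rw [← setIntegral_indicator hu]
        rw [show u.indicator g = g * ind by
          funext ω; by_cases h : ω ∈ u <;> simp [hind_def, h]]
        rw [← setIntegral_condExp hm hgu_int htm]
        refine setIntegral_congr_ae (hm t htm) ?_
        filter_upwards [condExp_mul_of_stronglyMeasurable_left (μ := P)
          hgm.stronglyMeasurable hgu_int hindu_int] with ω hω _
        exact hω
      have hAu : u.indicator A = (u ∩ a).indicator (fun _ => (1:ℝ)) := by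
        funext ω
        rw [hAind]
        by_cases h : ω ∈ u <;> by_cases h' : ω ∈ a <;>
          simp [Set.indicator_apply, h, h']
      have hR : ∫ ω in t ∩ u, A ω ∂P = ∫ ω in t, ((P[ind | m]) * g) ω ∂P := by
        rw [← setIntegral_indicator hu, hAu,
          ← setIntegral_condExp hm ((integrable_const (1:ℝ)).indicator (hu.inter ha)) htm]
        refine setIntegral_congr_ae (hm t htm) ?_
        have hmul := (condIndepFun_iff_condExp_inter_preimage_eq_mul
          (hm' := hm) (μ := P) hW hA).mp hCI C {1} hC (measurableSet_singleton _)
        rw [hCu] at hmul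
        have hga : g =ᵐ[P] P[a.indicator (fun _ => (1:ℝ)) | m] := by
          rw [← hAind]; exact hg
        filter_upwards [hmul, hga] with ω h1 h2 _
        calc (P[(u ∩ a).indicator (fun _ => (1:ℝ)) | m]) ω
            = (P[u.indicator (fun _ => (1:ℝ)) | m]) ω
              * (P[a.indicator (fun _ => (1:ℝ)) | m]) ω := h1
          _ = ((P[ind | m]) * g) ω := by rw [← h2]; rfl
      rw [hL, hR]
      exact integral_congr_ae (ae_of_all _ fun ω => by simp [Pi.mul_apply, mul_comm])
    · intro t htm' hC
      have ht : MeasurableSet[mΩ] t := hm' t htm'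
      have h1 := integral_add_compl ht hgint
      have h2 := integral_add_compl ht hAint
      have := h_tot
      linarith
    · intro f hdisj hfm' hC
      rw [integral_iUnion (μ := P) (fun i => hm' _ (hfm' i)) hdisj hgint.integrableOn,
        integral_iUnion (μ := P) (fun i => hm' _ (hfm' i)) hdisj hAint.integrableOn]
      exact tsum_congr hC
  refine ae_eq_condExp_of_forall_setIntegral_eq hm' hAint
    (fun s _ _ => hgint.integrableOn) (fun s hs _ => main hs) ?_
  exact StronglyMeasurable.aestronglyMeasurable
    ((hgm.mono (le_sup_left : m ≤ m ⊔ mW) le_rfl).stronglyMeasurable)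

/-- the CATE is identified by the difference of the outcome regressions:
`Q¹(X) − Q⁰(X) = E[Y¹ − Y⁰ | σ(X)]` a.s. -/
theorem stmt5 {Ω 𝓧 : Type*} [MeasurableSpace Ω] [StandardBorelSpace Ω]
    [MeasurableSpace 𝓧]
    (P : Measure Ω) [IsProbabilityMeasure P]
    (X : Ω → 𝓧) (hX : Measurable X)
    (A Y0 Y1 Y : Ω → ℝ) (hA : Measurable A) (hY0 : Measurable Y0) (hY1 : Measurable Y1)
    (hA01 : ∀ ω, A ω = 0 ∨ A ω = 1)
    (hYdef : ∀ ω, Y ω = A ω * Y1 ω + (1 - A ω) * Y0 ω)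
    (pr : 𝓧 → ℝ) (hprm : Measurable pr) (hpr : ∀ x, 0 < pr x ∧ pr x < 1)
    (hprCE : (fun ω => pr (X ω)) =ᵐ[P] P[A | MeasurableSpace.comap X inferInstance])
    (hCE : CondIndepFun (MeasurableSpace.comap X inferInstance) hX.comap_le
      (fun ω => (Y0 ω, Y1 ω)) A P)
    (Q0 Q1 : 𝓧 → ℝ) (hQ0m : Measurable Q0) (hQ1m : Measurable Q1)
    (hQ1 : P[fun ω => A ω * (Y ω - Q1 (X ω)) | MeasurableSpace.comap X inferInstance]
      =ᵐ[P] fun _ => (0 : ℝ))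
    (hQ0 : P[fun ω => (1 - A ω) * (Y ω - Q0 (X ω)) | MeasurableSpace.comap X inferInstance]
      =ᵐ[P] fun _ => (0 : ℝ))
    (hIY : Integrable (fun ω => Y1 ω - Y0 ω) P)
    (hIQ1 : Integrable (fun ω => A ω * (Y ω - Q1 (X ω))) P)
    (hIQ0 : Integrable (fun ω => (1 - A ω) * (Y ω - Q0 (X ω))) P) :
    (fun ω => Q1 (X ω) - Q0 (X ω)) =ᵐ[P]
      P[fun ω => Y1 ω - Y0 ω | MeasurableSpace.comap X inferInstance] := by
  letI mΩ : MeasurableSpace Ω := inferInstance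
  have hm : MeasurableSpace.comap X inferInstance ≤ mΩ := hX.comap_le
  set m : MeasurableSpace Ω := MeasurableSpace.comap X inferInstance with hm_def
  set W : Ω → ℝ × ℝ := fun ω => (Y0 ω, Y1 ω) with hW_def
  set m' : MeasurableSpace Ω := m ⊔ MeasurableSpace.comap W inferInstance with hm'_def
  letI : MeasurableSpace Ω := mΩ
  have hWm : Measurable[mΩ] W := hY0.prodMk hY1
  have hmm' : m ≤ m' := le_sup_left
  have hm' : m' ≤ mΩ := sup_le hm hWm.comap_le
  -- basic measurability and integrability facts
  have hprb : ∀ ω, |pr (X ω)| ≤ 1 := by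
    intro ω; rw [abs_le]; constructor <;> linarith [(hpr (X ω)).1, (hpr (X ω)).2]
  have hXmm : Measurable[m] X := Measurable.of_comap_le le_rfl
  have hprmX : Measurable[m] fun ω => pr (X ω) := hprm.comp hXmm
  have hAint : Integrable A P := by
    refine (integrable_const (1:ℝ)).mono' hA.aestronglyMeasurable (ae_of_all _ fun ω => ?_)
    rcases hA01 ω with h | h <;> simp [h]
  -- Step 1 : conditional expectation of A given the enlarged σ-algebra
  have key1 : (fun ω => pr (X ω)) =ᵐ[P] P[A | m'] :=
    condexp_sup_of_condIndepFun P hm hWm hA hA01 hCE hprmX hprb hprCE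
  have key0 : (fun ω => 1 - pr (X ω)) =ᵐ[P] P[(fun ω => 1 - A ω) | m'] := by
    have h1 : P[(fun ω => 1 - A ω) | m'] =ᵐ[P]
        P[(fun _ => (1:ℝ)) | m'] - P[A | m'] :=
      condExp_sub (μ := P) (m := m') (integrable_const (1:ℝ)) hAint
    have h2 : P[(fun _ => (1:ℝ)) | m'] = fun _ => (1:ℝ) := condExp_const hm' 1
    filter_upwards [h1, key1] with ω hω h1ω
    rw [hω, Pi.sub_apply, h2, ← h1ω]
  -- Step 2 : the residuals
  set V1 : Ω → ℝ := fun ω => Y1 ω - Q1 (X ω) with hV1_def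
  set V0 : Ω → ℝ := fun ω => Y0 ω - Q0 (X ω) with hV0_def
  have hWc : Measurable[MeasurableSpace.comap W inferInstance] W :=
    Measurable.of_comap_le le_rfl
  have hY1m' : Measurable[m'] Y1 :=
    (measurable_snd.comp hWc).mono (le_sup_right : _ ≤ m') le_rfl
  have hY0m' : Measurable[m'] Y0 :=
    (measurable_fst.comp hWc).mono (le_sup_right : _ ≤ m') le_rfl
  have hQ1Xm : Measurable[m] fun ω => Q1 (X ω) := hQ1m.comp hXmm
  have hQ0Xm : Measurable[m] fun ω => Q0 (X ω) := hQ0m.comp hXmm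
  have hV1m' : StronglyMeasurable[m'] V1 :=
    (hY1m'.sub (hQ1Xm.mono hmm' le_rfl)).stronglyMeasurable
  have hV0m' : StronglyMeasurable[m'] V0 :=
    (hY0m'.sub (hQ0Xm.mono hmm' le_rfl)).stronglyMeasurable
  have hAV1 : (fun ω => A ω * (Y ω - Q1 (X ω))) = V1 * A := by
    funext ω
    simp only [Pi.mul_apply, hV1_def, hYdef ω]
    rcases hA01 ω with h | h <;> rw [h] <;> ring
  have hA1V0 : (fun ω => (1 - A ω) * (Y ω - Q0 (X ω))) = V0 * fun ω => 1 - A ω := by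
    funext ω
    simp only [Pi.mul_apply, hV0_def, hYdef ω]
    rcases hA01 ω with h | h <;> rw [h] <;> ring
  have hIV1A : Integrable (V1 * A) P := hAV1 ▸ hIQ1
  have hIA1 : Integrable (fun ω => 1 - A ω) P := (integrable_const (1:ℝ)).sub hAint
  have hIV0A : Integrable (V0 * fun ω => 1 - A ω) P := hA1V0 ▸ hIQ0
  have e1 : P[V1 * A | m'] =ᵐ[P] V1 * fun ω => pr (X ω) := by
    filter_upwards [condExp_mul_of_stronglyMeasurable_left (μ := P) hV1m' hIV1A hAint, key1]
      with ω hω h1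
    rw [hω, Pi.mul_apply, Pi.mul_apply, ← h1]
  have e0 : P[(V0 * fun ω => 1 - A ω) | m'] =ᵐ[P] V0 * fun ω => 1 - pr (X ω) := by
    filter_upwards [condExp_mul_of_stronglyMeasurable_left (μ := P) hV0m' hIV0A hIA1, key0]
      with ω hω h1
    rw [hω, Pi.mul_apply, Pi.mul_apply, ← h1]
  have hU1 : Integrable (V1 * fun ω => pr (X ω)) P := integrable_condExp.congr e1
  have hU0 : Integrable (V0 * fun ω => 1 - pr (X ω)) P := integrable_condExp.congr e0
  -- Step 3 : tower property
  have hU1zero : P[(V1 * fun ω => pr (X ω)) | m] =ᵐ[P] fun _ => (0:ℝ) :=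
    calc P[(V1 * fun ω => pr (X ω)) | m]
        =ᵐ[P] P[P[V1 * A | m'] | m] := (condExp_congr_ae e1).symm
      _ =ᵐ[P] P[V1 * A | m] := condExp_condExp_of_le hmm' hm'
      _ =ᵐ[P] fun _ => (0:ℝ) := by rw [← hAV1]; exact hQ1
  have hU0zero : P[(V0 * fun ω => 1 - A ω) | m] =ᵐ[P] fun _ => (0:ℝ) := by
    rw [← hA1V0]; exact hQ0
  have hU0zero' : P[(V0 * fun ω => 1 - pr (X ω)) | m] =ᵐ[P] fun _ => (0:ℝ) :=
    calc P[(V0 * fun ω => 1 - pr (X ω)) | m]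
        =ᵐ[P] P[P[(V0 * fun ω => 1 - A ω) | m'] | m] := (condExp_congr_ae e0).symm
      _ =ᵐ[P] P[(V0 * fun ω => 1 - A ω) | m] := condExp_condExp_of_le hmm' hm'
      _ =ᵐ[P] fun _ => (0:ℝ) := hU0zero
  -- Step 4 : multiply by bounded m-measurable weights
  set w : Ω → ℝ := fun ω => pr (X ω) * (1 - pr (X ω)) with hw_def
  have hw_m : Measurable[m] w := hprmX.mul (measurable_const.sub hprmX)
  have hwpos : ∀ ω, 0 < w ω := fun ω =>
    mul_pos (hpr (X ω)).1 (by linarith [(hpr (X ω)).2])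
  have h1prb : ∀ ω, |1 - pr (X ω)| ≤ 1 := by
    intro ω; rw [abs_le]; constructor <;> linarith [(hpr (X ω)).1, (hpr (X ω)).2]
  have h1prm : Measurable[m] fun ω => 1 - pr (X ω) := measurable_const.sub hprmX
  have hWV1int : Integrable ((fun ω => 1 - pr (X ω)) * (V1 * fun ω => pr (X ω))) P := by
    refine hU1.bdd_mul ((h1prm.mono hm le_rfl).aestronglyMeasurable) (c := 1) (ae_of_all _ fun ω => ?_)
    simpa using h1prb ω
  have hWV0int : Integrable ((fun ω => pr (X ω)) * (V0 * fun ω => 1 - pr (X ω))) P := by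
    refine hU0.bdd_mul ((hprmX.mono hm le_rfl).aestronglyMeasurable) (c := 1) (ae_of_all _ fun ω => ?_)
    simpa using hprb ω
  have z1 : P[(fun ω => 1 - pr (X ω)) * (V1 * fun ω => pr (X ω)) | m]
      =ᵐ[P] fun _ => (0:ℝ) := by
    filter_upwards [condExp_mul_of_stronglyMeasurable_left (μ := P)
      (h1prm.stronglyMeasurable) hWV1int hU1, hU1zero] with ω hω h0
    rw [hω, Pi.mul_apply, h0]; ring
  have z0 : P[(fun ω => pr (X ω)) * (V0 * fun ω => 1 - pr (X ω)) | m]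
      =ᵐ[P] fun _ => (0:ℝ) := by
    filter_upwards [condExp_mul_of_stronglyMeasurable_left (μ := P)
      (hprmX.stronglyMeasurable) hWV0int hU0, hU0zero'] with ω hω h0
    rw [hω, Pi.mul_apply, h0]; ring
  have hWV1eq : (fun ω => 1 - pr (X ω)) * (V1 * fun ω => pr (X ω))
      = fun ω => w ω * V1 ω := by
    funext ω; simp only [Pi.mul_apply, hw_def]; ring
  have hWV0eq : (fun ω => pr (X ω)) * (V0 * fun ω => 1 - pr (X ω))
      = fun ω => w ω * V0 ω := by
    funext ω; simp only [Pi.mul_apply, hw_def]; ring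
  rw [hWV1eq] at z1 hWV1int
  rw [hWV0eq] at z0 hWV0int
  -- Step 5 : combine
  have hwYint : Integrable (w * fun ω => Y1 ω - Y0 ω) P := by
    refine hIY.bdd_mul ((hw_m.mono hm le_rfl).aestronglyMeasurable) (c := 1) (ae_of_all _ fun ω => ?_)
    have h1 := hpr (X ω)
    have : w ω ≤ 1 := by
      show pr (X ω) * (1 - pr (X ω)) ≤ 1
      nlinarith [h1.1, h1.2]
    simp only [Real.norm_eq_abs, abs_le]
    constructor <;> nlinarith [hwpos ω]
  have hpull : P[(w * fun ω => Y1 ω - Y0 ω) | m]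
      =ᵐ[P] w * P[fun ω => Y1 ω - Y0 ω | m] :=
    condExp_mul_of_stronglyMeasurable_left (μ := P) hw_m.stronglyMeasurable hwYint hIY
  have hfun : (fun ω => w ω * (Q1 (X ω) - Q0 (X ω)))
      = ((w * fun ω => Y1 ω - Y0 ω) - fun ω => w ω * V1 ω) + fun ω => w ω * V0 ω := by
    funext ω
    simp only [Pi.add_apply, Pi.sub_apply, Pi.mul_apply, hV1_def, hV0_def]
    ring
  have hwQint : Integrable (fun ω => w ω * (Q1 (X ω) - Q0 (X ω))) P := by
    rw [hfun]; exact (hwYint.sub hWV1int).add hWV0int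
  have hsmQ : StronglyMeasurable[m] fun ω => w ω * (Q1 (X ω) - Q0 (X ω)) :=
    (hw_m.mul (hQ1Xm.sub hQ0Xm)).stronglyMeasurable
  have hlin : P[fun ω => w ω * (Q1 (X ω) - Q0 (X ω)) | m]
      =ᵐ[P] fun ω => w ω * (P[fun ω => Y1 ω - Y0 ω | m]) ω := by
    rw [hfun]
    calc P[(((w * fun ω => Y1 ω - Y0 ω) - fun ω => w ω * V1 ω) + fun ω => w ω * V0 ω) | m]
        =ᵐ[P] P[((w * fun ω => Y1 ω - Y0 ω) - fun ω => w ω * V1 ω) | m]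
            + P[fun ω => w ω * V0 ω | m] :=
          condExp_add (hwYint.sub hWV1int) hWV0int m
      _ =ᵐ[P] (P[(w * fun ω => Y1 ω - Y0 ω) | m] - P[fun ω => w ω * V1 ω | m])
            + P[fun ω => w ω * V0 ω | m] := by
          filter_upwards [condExp_sub (μ := P) (m := m) hwYint hWV1int] with ω hω
          rw [Pi.add_apply, Pi.add_apply, hω]
      _ =ᵐ[P] fun ω => w ω * (P[fun ω => Y1 ω - Y0 ω | m]) ω := by
          filter_upwards [hpull, z1, z0] with ω h1 h2 h3
          simp only [Pi.add_apply, Pi.sub_apply, h1, h2, h3, Pi.mul_apply]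
          ring
  have final : (fun ω => w ω * (Q1 (X ω) - Q0 (X ω)))
      =ᵐ[P] fun ω => w ω * (P[fun ω => Y1 ω - Y0 ω | m]) ω := by
    calc (fun ω => w ω * (Q1 (X ω) - Q0 (X ω)))
        = P[fun ω => w ω * (Q1 (X ω) - Q0 (X ω)) | m] :=
          (condExp_of_stronglyMeasurable hm hsmQ hwQint).symm
      _ =ᵐ[P] fun ω => w ω * (P[fun ω => Y1 ω - Y0 ω | m]) ω := hlin
  filter_upwards [final] with ω h
  exact mul_left_cancel₀ (ne_of_gt (hwpos ω)) h
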